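/- Let r ≥ 1 and t > 0. If Ent(f) ≤ t·E(f, log f) holds for every r-regular function f : X → (0,∞), then Ent(f) ≤ H(r)·t·E(√f, √f) holds for every r-regular function f : X → (0,∞), where H(r) := ((√r + 1)/(√r − 1))·log r for r > 1 and H(1) := 4. Equivalently, t_LS(r) ≤ H(r)·t_MLS(r) for the restricted optimal constants. -/

import Mathlib

open Finset

noncomputable section

variable {X : Type*} [Fintype X] [DecidableEq X] [Nonempty X]

/-- Dirichlet form `E(f,g) = (1/2) ∑_{x,y} π(x) Q(x,y) (f(x)-f(y))(g(x)-g(y))`. -/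
def dirichletForm (π : X → ℝ) (Q : X → X → ℝ) (f g : X → ℝ) : ℝ :=
  (1 / 2) * ∑ x : X, ∑ y : X, π x * Q x y * (f x - f y) * (g x - g y)

/-- Mean `E[f] = ∑_x π(x) f(x)`. -/
def mean (π : X → ℝ) (f : X → ℝ) : ℝ := ∑ x : X, π x * f x

/-- Entropy `Ent(f) = E[f log f] - E[f] log E[f]`. -/
def entropy (π : X → ℝ) (f : X → ℝ) : ℝ :=
  mean π (fun x => f x * Real.log (f x)) - mean π f * Real.log (mean π f)

/-- Variance `Var(f) = E[f²] - E[f]²`. -/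
def variance (π : X → ℝ) (f : X → ℝ) : ℝ :=
  mean π (fun x => f x ^ 2) - (mean π f) ^ 2

/-- Total jump rate `Q(x) = ∑_{y ≠ x} Q(x,y)`. -/
def jumpRate (Q : X → X → ℝ) (x : X) : ℝ := ∑ y ∈ univ.erase x, Q x y

/-- Sparsity parameter `p = min_{(x,y) ∈ E} Q(x,y) / max(Q(x), Q(y,x))`. -/
def sparsity (Q : X → X → ℝ) : ℝ :=
  sInf {s : ℝ | ∃ x y : X, x ≠ y ∧ 0 < Q x y ∧
    s = Q x y / max (jumpRate Q x) (Q y x)}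

/-- The transition graph `(X, E)` (symmetric since under reversibility
`Q(x,y) > 0 ↔ Q(y,x) > 0`). -/
def chainGraph (Q : X → X → ℝ) : SimpleGraph X where
  Adj x y := x ≠ y ∧ (0 < Q x y ∨ 0 < Q y x)
  symm := ⟨fun x y h => ⟨h.1.symm, h.2.symm⟩⟩
  loopless := ⟨fun x h => h.1 rfl⟩

/-- Graph distance on `(X, E)`. -/
def graphDist (Q : X → X → ℝ) (x y : X) : ℕ := (chainGraph Q).dist x y

/-- Regularization `f⋆(x) = max_z r^{-d(x,z)} f(z)`. -/
def fStar (Q : X → X → ℝ) (r : ℝ) (f : X → ℝ) (x : X) : ℝ :=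
  univ.sup' univ_nonempty (fun z => r ^ (-(graphDist Q x z : ℤ)) * f z)

/-- `(x,y)` is an allowed transition. -/
def IsEdge (Q : X → X → ℝ) (e : X × X) : Prop := e.1 ≠ e.2 ∧ 0 < Q e.1 e.2

/-- The edge set `E = {(x,y) : x ≠ y, Q(x,y) > 0}` as a finset. -/
def edges (Q : X → X → ℝ) : Finset (X × X) :=
  univ.filter (fun e => e.1 ≠ e.2 ∧ 0 < Q e.1 e.2)

/-- Edge weight `c(x,y) = π(x) Q(x,y)`. -/
def edgeWeight (π : X → ℝ) (Q : X → X → ℝ) (e : X × X) : ℝ := π e.1 * Q e.1 e.2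

/-- Distance between edges: `d(e,e') = ℓ - 1` where `ℓ` is the minimal length of a
path `(x_0, …, x_ℓ)` with `(x_0,x_1) = e` and `(x_{ℓ-1}, x_ℓ) = e'`. -/
def edgeDist (Q : X → X → ℝ) (e e' : X × X) : ℕ :=
  sInf {n : ℕ | ∃ c : ℕ → X, c 0 = e.1 ∧ c 1 = e.2 ∧ c n = e'.1 ∧ c (n + 1) = e'.2 ∧
    ∀ i < n + 1, (chainGraph Q).Adj (c i) (c (i + 1))}

/-- `κ = max_{e' ∈ E} (1/c(e')) ∑_{e ∈ E} c(e) r^{-d(e,e')}`. -/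
def kappa (π : X → ℝ) (Q : X → X → ℝ) (r : ℝ) : ℝ :=
  sSup {k : ℝ | ∃ e' ∈ edges Q, k = (1 / edgeWeight π Q e') *
    ∑ e ∈ edges Q, edgeWeight π Q e * r ^ (-(edgeDist Q e e' : ℤ))}

/-- `H(w) = ((√w + 1)/(√w - 1)) log w` for `w ≠ 1`, and `H(1) = 4`. -/
def Hfun (w : ℝ) : ℝ :=
  if w = 1 then 4 else ((Real.sqrt w + 1) / (Real.sqrt w - 1)) * Real.log w

/-- A function is `r`-regular if `f(x) ≤ r f(y)` across every edge. -/
def IsRRegular (Q : X → X → ℝ) (r : ℝ) (f : X → ℝ) : Prop :=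
  ∀ x y : X, x ≠ y → 0 < Q x y → f x ≤ r * f y

/-- Maximum degree of the graph `(X, E)`. -/
def maxDegree (Q : X → X → ℝ) : ℕ :=
  univ.sup (fun x : X => Nat.card {y : X // (chainGraph Q).Adj x y})

/-- Irreducibility: every state can be reached from every other through allowed
transitions. -/
def MarkovIrreducible (Q : X → X → ℝ) : Prop :=
  ∀ x y : X, Relation.ReflTransGen (fun a b => a ≠ b ∧ 0 < Q a b) x y


lemma log_add_inv_mono {a b : ℝ} (ha : 1 ≤ a) (hab : a ≤ b) :
    Real.log a + a⁻¹ ≤ Real.log b + b⁻¹ := by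
  have ha0 : (0:ℝ) < a := lt_of_lt_of_le one_pos ha
  have hb0 : (0:ℝ) < b := lt_of_lt_of_le ha0 hab
  have h : Real.log (a / b) ≤ a / b - 1 := Real.log_le_sub_one_of_pos (by positivity)
  rw [Real.log_div ha0.ne' hb0.ne'] at h
  have e : 1 - a / b - (a⁻¹ - b⁻¹) = (b - a) * (a - 1) / (a * b) := by
    field_simp
  have hpos : 0 ≤ (b - a) * (a - 1) / (a * b) := by
    apply div_nonneg
    · nlinarith
    · positivity
  linarith

lemma phi_convex : ConvexOn ℝ (Set.Ici (1:ℝ)) (fun x : ℝ => (x + 1) * Real.log x) := by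
  have hder : ∀ x ∈ interior (Set.Ici (1:ℝ)),
      HasDerivAt (fun x : ℝ => (x + 1) * Real.log x)
        (Real.log x + (x + 1) * x⁻¹) x := by
    intro x hx
    rw [interior_Ici] at hx
    have hx0 : (0:ℝ) < x := lt_trans one_pos hx
    have h1 : HasDerivAt (fun x : ℝ => x + 1) 1 x := (hasDerivAt_id x).add_const 1
    have h2 : HasDerivAt Real.log x⁻¹ x := Real.hasDerivAt_log hx0.ne'
    have := h1.mul h2
    simp only [one_mul] at this; exact this
  apply MonotoneOn.convexOn_of_deriv (convex_Ici 1)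
  · apply ContinuousOn.mul (by fun_prop)
    apply Real.continuousOn_log.mono
    intro x hx
    simp only [Set.mem_Ici] at hx
    simp only [Set.mem_compl_iff, Set.mem_singleton_iff]
    intro h; rw [h] at hx; linarith
  · intro x hx
    exact (hder x hx).differentiableAt.differentiableWithinAt
  · intro a ha b hb hab
    rw [(hder a ha).deriv, (hder b hb).deriv]
    rw [interior_Ici] at ha hb
    have ha0 : (0:ℝ) < a := lt_trans one_pos ha
    have hb0 : (0:ℝ) < b := lt_trans one_pos hb
    have h := log_add_inv_mono (le_of_lt ha) hab
    have e1 : (a + 1) * a⁻¹ = 1 + a⁻¹ := by field_simp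
    have e2 : (b + 1) * b⁻¹ = 1 + b⁻¹ := by field_simp
    rw [e1, e2]; linarith

lemma chord_ineq {ρ x : ℝ} (hρ : 1 < ρ) (hx1 : 1 ≤ x) (hxρ : x ≤ ρ) :
    (ρ - 1) * ((x + 1) * Real.log x) ≤ (x - 1) * ((ρ + 1) * Real.log ρ) := by
  have hρ1 : (0:ℝ) < ρ - 1 := by linarith
  have hA : (0:ℝ) ≤ (ρ - x) / (ρ - 1) := div_nonneg (by linarith) hρ1.le
  have hB : (0:ℝ) ≤ (x - 1) / (ρ - 1) := div_nonneg (by linarith) hρ1.le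
  have hAB : (ρ - x) / (ρ - 1) + (x - 1) / (ρ - 1) = 1 := by field_simp; ring
  have h := phi_convex.2 (Set.self_mem_Ici) (show ρ ∈ Set.Ici (1:ℝ) from le_of_lt hρ)
    hA hB hAB
  have hx : ((ρ - x) / (ρ - 1)) • (1:ℝ) + ((x - 1) / (ρ - 1)) • ρ = x := by
    simp only [smul_eq_mul]; field_simp; ring
  rw [hx] at h
  simp only [smul_eq_mul, Real.log_one, mul_zero, zero_add] at h
  have h2 := mul_le_mul_of_nonneg_left h hρ1.le
  have e : (ρ - 1) * ((x - 1) / (ρ - 1) * ((ρ + 1) * Real.log ρ)) =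
      (x - 1) * ((ρ + 1) * Real.log ρ) := by field_simp
  calc (ρ - 1) * ((x + 1) * Real.log x) ≤
      (ρ - 1) * ((x - 1) / (ρ - 1) * ((ρ + 1) * Real.log ρ)) := by nlinarith [h2]
    _ = (x - 1) * ((ρ + 1) * Real.log ρ) := e

lemma pointwise_key {r a b : ℝ} (hr : 1 ≤ r) (ha : 0 < a) (hb : 0 < b)
    (hba : b ≤ a) (hab : a ≤ r * b) :
    (a - b) * (Real.log a - Real.log b) ≤
      Hfun r * (Real.sqrt a - Real.sqrt b) ^ 2 := by
  rcases eq_or_lt_of_le hba with hba1 | hba1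
  · rw [hba1]; simp
  · have hr1 : 1 < r := by nlinarith
    set u := Real.sqrt a with hu
    set v := Real.sqrt b with hv
    set ρ := Real.sqrt r with hρ
    have hv0 : 0 < v := Real.sqrt_pos.mpr hb
    have hu0 : 0 < u := Real.sqrt_pos.mpr ha
    have hvu : v < u := Real.sqrt_lt_sqrt hb.le hba1
    have hρ1 : 1 < ρ := by
      rw [hρ, show (1:ℝ) = Real.sqrt 1 by simp]
      exact Real.sqrt_lt_sqrt (by norm_num) hr1
    have huρv : u ≤ ρ * v := by
      rw [hu, hρ, hv, ← Real.sqrt_mul (by linarith : (0:ℝ) ≤ r)]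
      exact Real.sqrt_le_sqrt hab
    set x := u / v with hxdef
    have hx1 : 1 < x := (one_lt_div hv0).mpr hvu
    have hxρ : x ≤ ρ := by rw [hxdef, div_le_iff₀ hv0]; exact huρv
    have hC := chord_ineq hρ1 hx1.le hxρ
    have hLx : Real.log x = Real.log u - Real.log v := Real.log_div hu0.ne' hv0.ne'
    have hau : a = u ^ 2 := (Real.sq_sqrt ha.le).symm
    have hbv : b = v ^ 2 := (Real.sq_sqrt hb.le).symm
    have hla : Real.log a = 2 * Real.log u := by
      rw [hau, Real.log_pow]; push_cast; ring
    have hlb : Real.log b = 2 * Real.log v := by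
      rw [hbv, Real.log_pow]; push_cast; ring
    have hlr : Real.log r = 2 * Real.log ρ := by
      rw [hρ, Real.log_sqrt (by linarith)]; ring
    have hHf : Hfun r = (ρ + 1) / (ρ - 1) * Real.log r := by
      rw [Hfun, if_neg (by linarith : r ≠ 1)]
    have huxv : u = x * v := by rw [hxdef]; field_simp
    have hρm : (0:ℝ) < ρ - 1 := by linarith
    rw [hla, hlb, hau, hbv, hHf, hlr]
    have hR : (ρ + 1) / (ρ - 1) * (2 * Real.log ρ) * (u - v) ^ 2
        = ((ρ + 1) * (2 * Real.log ρ) * (u - v) ^ 2) / (ρ - 1) := by ring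
    rw [hR, le_div_iff₀ hρm]
    rw [hLx] at hC
    set Lu := Real.log u with hLu
    set Lv := Real.log v with hLv
    set Lρ := Real.log ρ with hLρ
    rw [huxv]
    have M := mul_le_mul_of_nonneg_left hC
      (show (0:ℝ) ≤ 2 * v ^ 2 * (x - 1) by nlinarith [sq_nonneg v, hx1])
    calc ((x * v) ^ 2 - v ^ 2) * (2 * Lu - 2 * Lv) * (ρ - 1)
        = 2 * v ^ 2 * (x - 1) * ((ρ - 1) * ((x + 1) * (Lu - Lv))) := by ring
      _ ≤ 2 * v ^ 2 * (x - 1) * ((x - 1) * ((ρ + 1) * Lρ)) := M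
      _ = (ρ + 1) * (2 * Lρ) * (x * v - v) ^ 2 := by ring

theorem restricted_lsi_le_Hfun_mul_mlsi
    (π : X → ℝ) (Q : X → X → ℝ)
    (hQ : ∀ x y : X, x ≠ y → 0 ≤ Q x y)
    (hQsum : ∀ x : X, ∑ y : X, Q x y = 0)
    (hirr : MarkovIrreducible Q)
    (hπpos : ∀ x : X, 0 < π x)
    (hπsum : ∑ x : X, π x = 1)
    (hrev : ∀ x y : X, π x * Q x y = π y * Q y x)
    (r : ℝ) (hr : 1 ≤ r) (t : ℝ) (ht : 0 < t)
    (hMLS : ∀ f : X → ℝ, (∀ x, 0 < f x) → IsRRegular Q r f →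
      entropy π f ≤ t * dirichletForm π Q f (fun x => Real.log (f x))) :
     ∀ f : X → ℝ, (∀ x, 0 < f x) → IsRRegular Q r f →
      entropy π f ≤ Hfun r * t *
        dirichletForm π Q (fun x => Real.sqrt (f x)) (fun x => Real.sqrt (f x)) := by
  intro f hf hreg
  have step1 := hMLS f hf hreg
  have key : ∀ x y : X,
      π x * Q x y * (f x - f y) * (Real.log (f x) - Real.log (f y)) ≤
      Hfun r * (π x * Q x y * (Real.sqrt (f x) - Real.sqrt (f y)) *
        (Real.sqrt (f x) - Real.sqrt (f y))) := by
    intro x y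
    rcases eq_or_ne x y with rfl | hxy
    · simp
    · rcases (hQ x y hxy).eq_or_lt with hQ0 | hQpos
      · rw [← hQ0]; simp
      · have hπQ : 0 ≤ π x * Q x y := mul_nonneg (hπpos x).le hQpos.le
        have hQyx : 0 < Q y x := by
          have hp : 0 < π y * Q y x := (hrev x y) ▸ mul_pos (hπpos x) hQpos
          nlinarith [hπpos y]
        have h1 : f x ≤ r * f y := hreg x y hxy hQpos
        have h2 : f y ≤ r * f x := hreg y x hxy.symm hQyx
        rcases le_total (f y) (f x) with hcase | hcase
        · have hp := pointwise_key hr (hf x) (hf y) hcase h1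
          nlinarith [mul_le_mul_of_nonneg_left hp hπQ]
        · have hp := pointwise_key hr (hf y) (hf x) hcase h2
          nlinarith [mul_le_mul_of_nonneg_left hp hπQ]
  have hsum : dirichletForm π Q f (fun x => Real.log (f x)) ≤
      Hfun r * dirichletForm π Q (fun x => Real.sqrt (f x)) (fun x => Real.sqrt (f x)) := by
    rw [dirichletForm, dirichletForm]
    have hS : ∑ x : X, ∑ y : X,
        π x * Q x y * (f x - f y) * (Real.log (f x) - Real.log (f y)) ≤
        ∑ x : X, ∑ y : X, Hfun r * (π x * Q x y *
          (Real.sqrt (f x) - Real.sqrt (f y)) * (Real.sqrt (f x) - Real.sqrt (f y))) :=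
      Finset.sum_le_sum (fun x _ => Finset.sum_le_sum (fun y _ => key x y))
    have e : ∑ x : X, ∑ y : X, Hfun r * (π x * Q x y *
          (Real.sqrt (f x) - Real.sqrt (f y)) * (Real.sqrt (f x) - Real.sqrt (f y)))
        = Hfun r * ∑ x : X, ∑ y : X, π x * Q x y *
          (Real.sqrt (f x) - Real.sqrt (f y)) * (Real.sqrt (f x) - Real.sqrt (f y)) := by
      rw [Finset.mul_sum]
      exact Finset.sum_congr rfl fun x _ => (Finset.mul_sum _ _ _).symm
    rw [e] at hS
    linarith
  have h3 := mul_le_mul_of_nonneg_left hsum ht.le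
  calc entropy π f ≤ t * dirichletForm π Q f (fun x => Real.log (f x)) := step1
    _ ≤ t * (Hfun r * dirichletForm π Q (fun x => Real.sqrt (f x))
        (fun x => Real.sqrt (f x))) := h3
    _ = Hfun r * t * dirichletForm π Q (fun x => Real.sqrt (f x))
        (fun x => Real.sqrt (f x)) := by ring


end
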